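/- Let n ≥ 1 and let A ∈ ℂ^{n×n} be accretive, i.e., A + A* is positive definite. Let θ ∈ [0, π/2) and write t := tan θ. Let A_h := (A + A*)/2 and A_s := (A − A*)/(2i). Suppose there exist unit vectors x₊ and x₋ in ℂⁿ with Im⟨x₊, A x₊⟩ > t·Re⟨x₊, A x₊⟩ and Im⟨x₋, A x₋⟩ < −t·Re⟨x₋, A x₋⟩ (strict feasibility of both phase branches). Define γ_θ(A) := sup{ ‖A x‖ : x ∈ ℂⁿ, ‖x‖ = 1, |Im⟨x, A x⟩| ≥ t·Re⟨x, A x⟩ }, g* := inf{ g ∈ ℝ : there exists τ ≥ 0 such that A*A − g·I + τ·(A_s − t·A_h) ⪯ 0 }, and h* := inf{ h ∈ ℝ : there exists τ ≥ 0 such that A*A − h·I + τ·(−A_s − t·A_h) ⪯ 0 }. Then both infima are over nonempty sets, g*, h* ≥ 0, and γ_θ(A) = max{ √g*, √h* }. -/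

import Mathlib

open scoped ComplexOrder Matrix InnerProductSpace ComplexConjugate

noncomputable section

variable {E : Type*} [NormedAddCommGroup E] [InnerProductSpace ℂ E]

/-- quadratic form of a linear map -/
def qf (T : E →ₗ[ℂ] E) (x : E) : ℂ := inner ℂ x (T x)

lemma qf_expand (T : E →ₗ[ℂ] E) (a b : ℂ) (x y : E) :
    qf T (a • x + b • y) =
      conj a * a * qf T x + conj a * b * inner ℂ x (T y)
        + conj b * a * inner ℂ y (T x) + conj b * b * qf T y := by
  simp only [qf, map_add, map_smul, inner_add_left, inner_add_right,
    inner_smul_left, inner_smul_right]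
  ring

lemma qf_real_smul (T : E →ₗ[ℂ] E) (r : ℝ) (x : E) :
    qf T ((r : ℂ) • x) = (r : ℂ)^2 * qf T x := by
  simp only [qf, map_smul, inner_smul_left, inner_smul_right, Complex.conj_ofReal]
  ring

lemma qf_zero (T : E →ₗ[ℂ] E) : qf T 0 = 0 := by simp [qf]

lemma phase_exists (p q : ℂ) :
    ∃ θ : ℝ, (Complex.exp (θ * Complex.I) * p + Complex.exp (-(θ * Complex.I)) * q).im = 0 := by
  set f : ℝ → ℝ := fun θ => (Complex.exp (θ * Complex.I) * p
    + Complex.exp (-(θ * Complex.I)) * q).im with hf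
  have hcont : Continuous f := by
    apply Complex.continuous_im.comp
    fun_prop
  have hpi : f Real.pi = - f 0 := by
    simp [hf, Complex.exp_neg, Complex.exp_pi_mul_I]; ring
  have h0 : (0:ℝ) ∈ Set.uIcc (f 0) (f Real.pi) := by
    rw [hpi]
    rcases le_total (f 0) 0 with h | h
    · exact Set.mem_uIcc.2 (Or.inl ⟨h, by linarith⟩)
    · exact Set.mem_uIcc.2 (Or.inr ⟨by linarith, h⟩)
  have := intermediate_value_uIcc (f := f) (a := 0) (b := Real.pi) hcont.continuousOn
  obtain ⟨θ, _, hθ⟩ := this h0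
  exact ⟨θ, hθ⟩

lemma halmos_core (T : E →ₗ[ℂ] E) (u v : E) (hu : ‖u‖ = 1) (hv : ‖v‖ = 1)
    (h0 : qf T u = 0) (h1 : qf T v = 1) (t : ℝ) (ht : t ∈ Set.Icc (0:ℝ) 1) :
    ∃ z : E, ‖z‖ = 1 ∧ qf T z = (t : ℂ) := by
  obtain ⟨θ, hθ⟩ := phase_exists (inner ℂ u (T v)) (inner ℂ v (T u))
  set ω : ℂ := Complex.exp (θ * Complex.I) with hω
  have hωnorm : ‖ω‖ = 1 := by simp [hω, Complex.norm_exp_ofReal_mul_I]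
  have hωconj : conj ω = Complex.exp (-(θ * Complex.I)) := by
    rw [hω, ← Complex.exp_conj]
    congr 1
    simp [map_mul, Complex.conj_ofReal]
  have hωconj_mul : conj ω * ω = 1 := by
    rw [mul_comm, Complex.mul_conj]
    norm_cast
    rw [← Complex.sq_norm ω] at *
    simp [hωnorm]
  set w : E := ω • v with hw
  have hwnorm : ‖w‖ = 1 := by rw [hw, norm_smul, hωnorm, one_mul, hv]
  have hgw : qf T w = 1 := by
    rw [hw, qf, map_smul, inner_smul_left, inner_smul_right, ← mul_assoc, hωconj_mul,
      one_mul, ← qf, h1]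
  set c : ℂ := inner ℂ u (T w) + inner ℂ w (T u) with hc
  have hcim : c.im = 0 := by
    have h1 : (inner ℂ u (T w) : ℂ) = ω * inner ℂ u (T v) := by
      rw [hw, map_smul, inner_smul_right]
    have h2 : (inner ℂ w (T u) : ℂ) = conj ω * inner ℂ v (T u) := by
      rw [hw, inner_smul_left]
    rw [hc, h1, h2, hωconj]
    exact hθ
  have hcre : c = (c.re : ℂ) := (Complex.ext (by simp) (by simp [hcim])).symm
  set z : ℝ → E := fun s => ((1 - s : ℝ) : ℂ) • u + ((s : ℝ) : ℂ) • w with hz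
  have hgz : ∀ s : ℝ, qf T (z s) = ((s^2 + s * (1-s) * c.re : ℝ) : ℂ) := by
    intro s
    rw [hz]
    simp only []
    rw [qf_expand, h0, hgw]
    simp only [Complex.conj_ofReal]
    have hwtu : (inner ℂ w (T u) : ℂ) = (c.re : ℂ) - inner ℂ u (T w) := by
      rw [← hcre, hc]; ring
    rw [hwtu]
    push_cast
    ring
  have hzne : ∀ s ∈ Set.Icc (0:ℝ) 1, z s ≠ 0 := by
    intro s hs hzero
    have hnorm : ‖((1 - s : ℝ) : ℂ) • u‖ = ‖((s : ℝ) : ℂ) • w‖ := by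
      have : ((1 - s : ℝ) : ℂ) • u = -(((s : ℝ) : ℂ) • w) := by
        rw [eq_neg_iff_add_eq_zero]; exact hzero
      rw [this, norm_neg]
    rw [norm_smul, norm_smul, hu, hwnorm] at hnorm
    simp only [mul_one, Complex.norm_real, Real.norm_eq_abs] at hnorm
    have hs2 : s = 1/2 := by
      rw [abs_of_nonneg (by linarith [hs.1, hs.2] : (0:ℝ) ≤ 1 - s),
        abs_of_nonneg hs.1] at hnorm
      linarith
    subst hs2
    have huw : u + w = 0 := by
      have h2 : ((2:ℂ))⁻¹ • (u + w) = 0 := by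
        rw [smul_add]
        convert hzero using 2 <;> norm_num
      have := smul_eq_zero.1 h2
      rcases this with h | h
      · norm_num at h
      · exact h
    have : w = -u := by rw [eq_neg_iff_add_eq_zero, add_comm]; exact huw
    rw [this] at hgw
    have : qf T (-u) = qf T u := by
      have : (-u : E) = ((-1 : ℝ) : ℂ) • u := by norm_num
      rw [this, qf_real_smul]; norm_num
    rw [this, h0] at hgw
    exact zero_ne_one hgw
  set h : ℝ → ℝ := fun s => (s^2 + s * (1-s) * c.re) / ‖z s‖^2 with hh
  have hcont : ContinuousOn h (Set.Icc 0 1) := by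
    apply ContinuousOn.div
    · fun_prop
    · apply Continuous.continuousOn; fun_prop
    · intro s hs
      exact pow_ne_zero 2 (norm_ne_zero_iff.2 (hzne s hs))
  have hh0 : h 0 = 0 := by simp [hh]
  have hh1 : h 1 = 1 := by
    have : z 1 = w := by simp [hz]
    simp [hh, this, hwnorm]
  have hmem : t ∈ Set.Icc (h 0) (h 1) := by rw [hh0, hh1]; exact ht
  obtain ⟨s, hs, hst⟩ := intermediate_value_Icc zero_le_one hcont hmem
  have hzs := hzne s hs
  have hn : ‖z s‖ ≠ 0 := norm_ne_zero_iff.2 hzs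
  refine ⟨((‖z s‖⁻¹ : ℝ) : ℂ) • z s, ?_, ?_⟩
  · have hcn : ‖((‖z s‖⁻¹ : ℝ) : ℂ)‖ = ‖z s‖⁻¹ := by
      simp
    rw [norm_smul, hcn]
    exact inv_mul_cancel₀ hn
  · have hnum : s^2 + s * (1-s) * c.re = t * ‖z s‖^2 := by
      rw [hh] at hst
      simp only [] at hst
      rw [div_eq_iff (pow_ne_zero 2 hn)] at hst
      linarith [hst]
    rw [qf_real_smul, hgz, hnum]
    push_cast
    field_simp

lemma segment_sphere (T : E →ₗ[ℂ] E) (u v : E) (hu : ‖u‖ = 1) (hv : ‖v‖ = 1)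
    (t : ℝ) (ht : t ∈ Set.Icc (0:ℝ) 1) :
    ∃ z : E, ‖z‖ = 1 ∧ qf T z = (1 - (t:ℂ)) * qf T u + (t:ℂ) * qf T v := by
  by_cases hab : qf T u = qf T v
  · exact ⟨u, hu, by rw [hab]; ring⟩
  · set a := qf T u with ha
    set b := qf T v with hb
    have hba : b - a ≠ 0 := sub_ne_zero.2 (Ne.symm hab)
    set T' : E →ₗ[ℂ] E := (b - a)⁻¹ • (T - a • LinearMap.id) with hT'
    have hqf' : ∀ x : E, qf T' x = (b - a)⁻¹ * (qf T x - a * (inner ℂ x x : ℂ)) := by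
      intro x
      simp only [hT', qf, LinearMap.smul_apply, LinearMap.sub_apply, LinearMap.id_apply,
        inner_smul_right, inner_sub_right]
      try ring
    have h0 : qf T' u = 0 := by
      rw [hqf', ← ha, inner_self_eq_norm_sq_to_K, hu]
      norm_num
    have h1 : qf T' v = 1 := by
      rw [hqf', ← hb, inner_self_eq_norm_sq_to_K, hv]
      norm_num
      field_simp
    obtain ⟨z, hz1, hz2⟩ := halmos_core T' u v hu hv h0 h1 t ht
    refine ⟨z, hz1, ?_⟩
    rw [hqf', inner_self_eq_norm_sq_to_K, hz1] at hz2
    norm_num at hz2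
    have hz3 : qf T z - a = (b - a) * (t:ℂ) := by
      have h := congrArg (fun w : ℂ => (b - a) * w) hz2
      rw [← mul_assoc, mul_inv_cancel₀ hba, one_mul] at h
      rw [h]
      try ring
    linear_combination hz3

lemma range_convex (T : E →ₗ[ℂ] E) : Convex ℝ (Set.range (qf T)) := by
  intro p hp q hq lam mu hlam hmu hsum
  rw [Complex.real_smul, Complex.real_smul]
  obtain ⟨x, hx⟩ := hp
  obtain ⟨y, hy⟩ := hq
  by_cases hx0 : x = 0
  · rw [hx0, qf_zero] at hx
    refine ⟨(Real.sqrt mu : ℂ) • y, ?_⟩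
    rw [qf_real_smul, hy, ← hx]
    rw [← Complex.ofReal_pow, Real.sq_sqrt hmu]
    ring
  by_cases hy0 : y = 0
  · rw [hy0, qf_zero] at hy
    refine ⟨(Real.sqrt lam : ℂ) • x, ?_⟩
    rw [qf_real_smul, hx, ← hy]
    rw [← Complex.ofReal_pow, Real.sq_sqrt hlam]
    ring
  · have hxn : ‖x‖ ≠ 0 := norm_ne_zero_iff.2 hx0
    have hyn : ‖y‖ ≠ 0 := norm_ne_zero_iff.2 hy0
    set u : E := ((‖x‖⁻¹ : ℝ) : ℂ) • x with hu
    set v : E := ((‖y‖⁻¹ : ℝ) : ℂ) • y with hv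
    have hun : ‖u‖ = 1 := by
      rw [hu, norm_smul]
      simp [inv_mul_cancel₀ hxn]
    have hvn : ‖v‖ = 1 := by
      rw [hv, norm_smul]
      simp [inv_mul_cancel₀ hyn]
    set c1 : ℝ := lam * ‖x‖^2 with hc1
    set c2 : ℝ := mu * ‖y‖^2 with hc2
    have hc1n : 0 ≤ c1 := by positivity
    have hc2n : 0 ≤ c2 := by positivity
    have hcsum : 0 < c1 + c2 := by
      rcases lt_or_eq_of_le hc1n with h | h
      · linarith
      rcases lt_or_eq_of_le hc2n with h' | h'
      · linarith
      · exfalso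
        have hl0 : lam = 0 := by
          by_contra hl
          have : 0 < c1 := by
            have : 0 < lam := lt_of_le_of_ne hlam (Ne.symm hl)
            rw [hc1]; positivity
          linarith
        have hm0 : mu = 0 := by
          by_contra hm
          have : 0 < c2 := by
            have : 0 < mu := lt_of_le_of_ne hmu (Ne.symm hm)
            rw [hc2]; positivity
          linarith
        rw [hl0, hm0] at hsum
        norm_num at hsum
    have hcne : c1 + c2 ≠ 0 := ne_of_gt hcsum
    set t : ℝ := c2 / (c1 + c2) with htdef
    have htmem : t ∈ Set.Icc (0:ℝ) 1 := by
      constructor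
      · positivity
      · rw [htdef, div_le_one hcsum]; linarith
    obtain ⟨z, hz1, hz2⟩ := segment_sphere T u v hun hvn t htmem
    have hAr : (c1 + c2) * (1 - t) * (‖x‖⁻¹)^2 = lam := by
      have hct : (c1 + c2) * t = c2 := by rw [htdef]; field_simp
      have e : (c1 + c2) * (1 - t) = c1 := by linear_combination (-1:ℝ) * hct
      rw [e, hc1]; field_simp
    have hBr : (c1 + c2) * t * (‖y‖⁻¹)^2 = mu := by
      have hct : (c1 + c2) * t = c2 := by rw [htdef]; field_simp
      rw [hct, hc2]; field_simp
    have hA : ((c1 + c2 : ℝ) : ℂ) * (1 - (t:ℂ)) * ((‖x‖⁻¹ : ℝ) : ℂ)^2 = (lam : ℂ) := by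
      have := congrArg (fun r : ℝ => (r : ℂ)) hAr
      push_cast at this ⊢
      convert this using 2
    have hB : ((c1 + c2 : ℝ) : ℂ) * (t:ℂ) * ((‖y‖⁻¹ : ℝ) : ℂ)^2 = (mu : ℂ) := by
      have := congrArg (fun r : ℝ => (r : ℂ)) hBr
      push_cast at this ⊢
      convert this using 2
    refine ⟨(Real.sqrt (c1 + c2) : ℂ) • z, ?_⟩
    rw [qf_real_smul, hz2]
    have hqu : qf T u = ((‖x‖⁻¹:ℝ):ℂ)^2 * qf T x := by rw [hu, qf_real_smul]
    have hqv : qf T v = ((‖y‖⁻¹:ℝ):ℂ)^2 * qf T y := by rw [hv, qf_real_smul]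
    rw [hqu, hqv, hx, hy]
    rw [← Complex.ofReal_pow, Real.sq_sqrt (le_of_lt hcsum)]
    linear_combination p * hA + q * hB

lemma s_lemma (T : E →ₗ[ℂ] E)
    (h1 : ∀ x : E, 0 ≤ (qf T x).im → (qf T x).re ≤ 0)
    (h2 : ∃ x₀ : E, 0 < (qf T x₀).im) :
    ∃ τ : ℝ, 0 ≤ τ ∧ ∀ x : E, (qf T x).re + τ * (qf T x).im ≤ 0 := by
  set F : Set ℂ := Set.range (qf T) with hF
  have hFconv : Convex ℝ F := range_convex T
  set C : Set ℂ := {z : ℂ | 0 < z.re} ∩ {z : ℂ | 0 < z.im} with hC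
  have hCconv : Convex ℝ C := (convex_halfSpace_re_gt 0).inter (convex_halfSpace_im_gt 0)
  have hCopen : IsOpen C := by
    apply IsOpen.inter
    · exact isOpen_lt continuous_const Complex.continuous_re
    · exact isOpen_lt continuous_const Complex.continuous_im
  have hdisj : Disjoint C F := by
    rw [Set.disjoint_left]
    rintro z ⟨hzre, hzim⟩ ⟨x, hx⟩
    have := h1 x (by rw [hx]; exact le_of_lt hzim)
    rw [hx] at this
    exact absurd hzre (not_lt.2 this)
  obtain ⟨f, u, hfC, hfF⟩ := geometric_hahn_banach_open hCconv hCopen hFconv hdisj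
  have h0F : (0 : ℂ) ∈ F := ⟨0, qf_zero T⟩
  have hu0 : u ≤ 0 := by simpa using hfF 0 h0F
  -- f b ≥ 0 for all b ∈ F
  have hFpos : ∀ x : E, 0 ≤ f (qf T x) := by
    intro x
    by_contra hneg
    push_neg at hneg
    set ε : ℝ := (u - 1) / f (qf T x) with hε
    have hεpos : 0 < ε := div_pos_of_neg_of_neg (by linarith) hneg
    have hmem : (ε : ℝ) • qf T x ∈ F := by
      refine ⟨(Real.sqrt ε : ℂ) • x, ?_⟩
      rw [qf_real_smul, ← Complex.ofReal_pow, Real.sq_sqrt (le_of_lt hεpos),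
        Complex.real_smul]
    have := hfF _ hmem
    rw [map_smul, smul_eq_mul, hε, div_mul_cancel₀ _ (ne_of_lt hneg)] at this
    linarith
  -- coordinates of f
  set α : ℝ := f 1 with hα
  set β : ℝ := f Complex.I with hβ
  have hfz : ∀ z : ℂ, f z = α * z.re + β * z.im := by
    intro z
    have hzd : f z = f ((z.re : ℝ) • (1 : ℂ) + (z.im : ℝ) • Complex.I) := by
      congr 1
      simp only [Complex.real_smul, mul_one]
      exact (Complex.re_add_im z).symm
    rw [hzd, map_add, map_smul, map_smul, smul_eq_mul, smul_eq_mul, hα, hβ]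
    ring
  have hαneg : α ≤ 0 := by
    by_contra hpos
    push_neg at hpos
    set ε : ℝ := α / (2 * (|β| + 1)) with hε
    have hεpos : 0 < ε := by positivity
    have hmem : (⟨1, ε⟩ : ℂ) ∈ C := ⟨by norm_num, by simpa using hεpos⟩
    have := hfC _ hmem
    rw [hfz] at this
    have hβε : β * ε ≥ -(α/2) := by
      have h1 : |β * ε| ≤ (|β|+1) * ε := by
        rw [abs_mul, abs_of_pos hεpos]
        have : |β| ≤ |β| + 1 := by linarith
        nlinarith [abs_nonneg β]
      have h2 : (|β|+1) * ε = α / 2 := by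
        rw [hε]; field_simp
      nlinarith [neg_abs_le (β * ε)]
    have : α * 1 + β * ε < u := this
    nlinarith
  have hβneg : β ≤ 0 := by
    by_contra hpos
    push_neg at hpos
    set ε : ℝ := β / (2 * (|α| + 1)) with hε
    have hεpos : 0 < ε := by positivity
    have hmem : (⟨ε, 1⟩ : ℂ) ∈ C := ⟨by simpa using hεpos, by norm_num⟩
    have := hfC _ hmem
    rw [hfz] at this
    have hαε : α * ε ≥ -(β/2) := by
      have h1 : |α * ε| ≤ (|α|+1) * ε := by
        rw [abs_mul, abs_of_pos hεpos]
        have : |α| ≤ |α| + 1 := by linarith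
        nlinarith [abs_nonneg α]
      have h2 : (|α|+1) * ε = β / 2 := by
        rw [hε]; field_simp
      nlinarith [neg_abs_le (α * ε)]
    have : α * ε + β * 1 < u := this
    nlinarith
  have hαlt : α < 0 := by
    rcases lt_or_eq_of_le hαneg with h | h
    · exact h
    · exfalso
      -- α = 0; then β * im ≥ 0 everywhere
      obtain ⟨x₀, hx₀⟩ := h2
      have hfx₀ := hFpos x₀
      rw [hfz, h] at hfx₀
      simp only [zero_mul, zero_add] at hfx₀
      have hβ0 : 0 ≤ β := by
        by_contra hb
        push_neg at hb
        nlinarith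
      have hβeq : β = 0 := le_antisymm hβneg hβ0
      have hmem : (⟨1, 1⟩ : ℂ) ∈ C := ⟨by norm_num, by norm_num⟩
      have hlt := hfC _ hmem
      rw [hfz, h, hβeq] at hlt
      norm_num at hlt
      linarith
  have hτ : 0 ≤ β / α := by
    rw [div_nonneg_iff]
    right
    exact ⟨hβneg, le_of_lt hαlt⟩
  refine ⟨β / α, hτ, ?_⟩
  intro x
  have := hFpos x
  rw [hfz] at this
  have hαne : α ≠ 0 := ne_of_lt hαlt
  have hβα : α * (β / α) = β := by field_simp
  have hprod : 0 ≤ α * ((qf T x).re + β / α * (qf T x).im) := by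
    have hexp : α * ((qf T x).re + β / α * (qf T x).im)
        = α * (qf T x).re + β * (qf T x).im := by
      rw [mul_add, ← mul_assoc, hβα]
    rw [hexp]
    exact this
  by_contra hcon
  push_neg at hcon
  nlinarith [hprod, hαlt, hcon]

lemma qf_addT (T₁ T₂ : E →ₗ[ℂ] E) (x : E) : qf (T₁ + T₂) x = qf T₁ x + qf T₂ x := by
  simp [qf, inner_add_right]

lemma qf_smulT (c : ℂ) (T : E →ₗ[ℂ] E) (x : E) : qf (c • T) x = c * qf T x := by
  simp [qf, inner_smul_right]

lemma qf_subT (T₁ T₂ : E →ₗ[ℂ] E) (x : E) : qf (T₁ - T₂) x = qf T₁ x - qf T₂ x := by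
  simp [qf, inner_sub_right]

section MatrixBridge

variable {n : ℕ}


lemma qf_L_apply (M : Matrix (Fin n) (Fin n) ℂ) (x : EuclideanSpace ℂ (Fin n)) :
    qf (Matrix.toEuclideanLin M) x = dotProduct (star ((WithLp.equiv 2 (Fin n → ℂ)) x))
      (M *ᵥ ((WithLp.equiv 2 (Fin n → ℂ)) x)) := by
  rw [qf, EuclideanSpace.inner_eq_star_dotProduct]; exact dotProduct_comm _ _

lemma qf_L_symm_apply (M : Matrix (Fin n) (Fin n) ℂ) (v : Fin n → ℂ) :
    qf (Matrix.toEuclideanLin M) ((WithLp.equiv 2 (Fin n → ℂ)).symm v) = dotProduct (star v) (M *ᵥ v) := by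
  rw [qf, EuclideanSpace.inner_eq_star_dotProduct]; exact dotProduct_comm _ _

lemma qf_L_conjTranspose (M : Matrix (Fin n) (Fin n) ℂ) (x : EuclideanSpace ℂ (Fin n)) :
    qf (Matrix.toEuclideanLin Mᴴ) x = conj (qf (Matrix.toEuclideanLin M) x) := by
  rw [qf_L_apply, qf_L_apply]
  set v := (WithLp.equiv 2 (Fin n → ℂ)) x with hv
  have h0 : conj (dotProduct (star v) (M *ᵥ v))
      = star (dotProduct (star v) (M *ᵥ v)) := rfl
  rw [h0, ← Matrix.star_dotProduct, Matrix.star_mulVec, dotProduct_comm,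
    ← Matrix.dotProduct_mulVec]
  exact dotProduct_comm _ _

lemma qf_L_hermitian_real (M : Matrix (Fin n) (Fin n) ℂ) (hM : M.IsHermitian)
    (x : EuclideanSpace ℂ (Fin n)) : qf (Matrix.toEuclideanLin M) x = (((qf (Matrix.toEuclideanLin M) x).re : ℝ) : ℂ) := by
  have h := qf_L_conjTranspose M x
  rw [hM.eq] at h
  have him : (qf (Matrix.toEuclideanLin M) x).im = 0 := by
    have := Complex.conj_eq_iff_im.1 h.symm
    exact this
  exact (Complex.ext (by simp) (by simp [him])).symm

lemma qf_L_one (x : EuclideanSpace ℂ (Fin n)) :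
    qf (Matrix.toEuclideanLin (1 : Matrix (Fin n) (Fin n) ℂ)) x = ((‖x‖^2 : ℝ) : ℂ) := by
  rw [qf_L_apply, Matrix.one_mulVec]
  have : dotProduct (star ((WithLp.equiv 2 (Fin n → ℂ)) x)) ((WithLp.equiv 2 (Fin n → ℂ)) x)
      = (inner ℂ x x : ℂ) := by
    rw [EuclideanSpace.inner_eq_star_dotProduct]; exact dotProduct_comm _ _
  rw [this, inner_self_eq_norm_sq_to_K]
  norm_num

lemma qf_L_mul_self (M : Matrix (Fin n) (Fin n) ℂ) (x : EuclideanSpace ℂ (Fin n)) :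
    qf (Matrix.toEuclideanLin (Mᴴ * M)) x = ((‖Matrix.toEuclideanLin M x‖^2 : ℝ) : ℂ) := by
  rw [qf_L_apply]
  set v := (WithLp.equiv 2 (Fin n → ℂ)) x with hv
  rw [← Matrix.mulVec_mulVec, Matrix.dotProduct_mulVec, ← Matrix.star_mulVec]
  have h1 : dotProduct (star (M *ᵥ v)) (M *ᵥ v)
      = (inner ℂ ((WithLp.equiv 2 (Fin n → ℂ)).symm (M *ᵥ v))
          ((WithLp.equiv 2 (Fin n → ℂ)).symm (M *ᵥ v)) : ℂ) := by
    rw [EuclideanSpace.inner_eq_star_dotProduct]; exact dotProduct_comm _ _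
  have h2 : Matrix.toEuclideanLin M x = (WithLp.equiv 2 (Fin n → ℂ)).symm (M *ᵥ v) := rfl
  rw [h1, ← h2, inner_self_eq_norm_sq_to_K]
  norm_num

lemma psd_iff_qf (M : Matrix (Fin n) (Fin n) ℂ) (hM : M.IsHermitian) :
    M.PosSemidef ↔ ∀ x : EuclideanSpace ℂ (Fin n), 0 ≤ (qf (Matrix.toEuclideanLin M) x).re := by
  constructor
  · intro h x
    have := (Matrix.posSemidef_iff_dotProduct_mulVec.1 h).2 ((WithLp.equiv 2 (Fin n → ℂ)) x)
    rw [← qf_L_apply] at this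
    exact (Complex.le_def.1 this).1
  · intro h
    refine Matrix.posSemidef_iff_dotProduct_mulVec.2 ⟨hM, fun v => ?_⟩
    rw [← qf_L_symm_apply]
    set x := (WithLp.equiv 2 (Fin n → ℂ)).symm v with hx
    have hre := h x
    have hreal := qf_L_hermitian_real M hM x
    rw [hreal]
    rw [Complex.le_def]
    constructor
    · simpa using hre
    · simp

end MatrixBridge

lemma qf_negT (T : E →ₗ[ℂ] E) (x : E) : qf (-T) x = -qf T x := by
  simp [qf, inner_neg_right]

lemma branch_sdp {n : ℕ} (A B : Matrix (Fin n) (Fin n) ℂ) (hB : B.IsHermitian)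
    (x₀ : EuclideanSpace ℂ (Fin n)) (hx₀ : ‖x₀‖ = 1)
    (hfeas : 0 < (qf (Matrix.toEuclideanLin B) x₀).re) :
    0 ≤ sSup {g : ℝ | ∃ x : EuclideanSpace ℂ (Fin n), ‖x‖ = 1 ∧
        0 ≤ (qf (Matrix.toEuclideanLin B) x).re ∧ g = ‖Matrix.toEuclideanLin A x‖} ∧
    {g : ℝ | ∃ τ : ℝ, 0 ≤ τ ∧ (-(Aᴴ * A - (g : ℂ) • 1 + (τ : ℂ) • B)).PosSemidef}.Nonempty ∧
    (∀ g ∈ {g : ℝ | ∃ τ : ℝ, 0 ≤ τ ∧ (-(Aᴴ * A - (g : ℂ) • 1 + (τ : ℂ) • B)).PosSemidef}, 0 ≤ g) ∧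
    sInf {g : ℝ | ∃ τ : ℝ, 0 ≤ τ ∧ (-(Aᴴ * A - (g : ℂ) • 1 + (τ : ℂ) • B)).PosSemidef}
      = (sSup {g : ℝ | ∃ x : EuclideanSpace ℂ (Fin n), ‖x‖ = 1 ∧
        0 ≤ (qf (Matrix.toEuclideanLin B) x).re ∧ g = ‖Matrix.toEuclideanLin A x‖})^2 := by
  set Bset : Set ℝ := {g : ℝ | ∃ x : EuclideanSpace ℂ (Fin n), ‖x‖ = 1 ∧
      0 ≤ (qf (Matrix.toEuclideanLin B) x).re ∧ g = ‖Matrix.toEuclideanLin A x‖} with hBset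
  set SSet : Set ℝ := {g : ℝ | ∃ τ : ℝ, 0 ≤ τ ∧
      (-(Aᴴ * A - (g : ℂ) • 1 + (τ : ℂ) • B)).PosSemidef} with hSSet
  set γp : ℝ := sSup Bset with hγp
  -- boundedness
  set CLM : EuclideanSpace ℂ (Fin n) →L[ℂ] EuclideanSpace ℂ (Fin n) :=
    LinearMap.toContinuousLinearMap (Matrix.toEuclideanLin A) with hCLM
  have hCLMapp : ∀ x : EuclideanSpace ℂ (Fin n), Matrix.toEuclideanLin A x = CLM x := by
    intro x
    rw [hCLM]
    exact (congrFun (LinearMap.coe_toContinuousLinearMap'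
      (Matrix.toEuclideanLin A)) x).symm
  have hBdd : BddAbove Bset := by
    refine ⟨‖CLM‖, ?_⟩
    rintro g ⟨x, hx, _, rfl⟩
    rw [hCLMapp]
    calc ‖CLM x‖ ≤ ‖CLM‖ * ‖x‖ := CLM.le_opNorm x
    _ = ‖CLM‖ := by rw [hx, mul_one]
  have hmem₀ : ‖Matrix.toEuclideanLin A x₀‖ ∈ Bset := ⟨x₀, hx₀, le_of_lt hfeas, rfl⟩
  have hBne : Bset.Nonempty := ⟨_, hmem₀⟩
  have hγnn : 0 ≤ γp := le_trans (norm_nonneg _) (le_csSup hBdd hmem₀)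
  -- quadratic form of the matrix combination
  have hNval : ∀ (g τ : ℝ) (x : EuclideanSpace ℂ (Fin n)),
      qf (Matrix.toEuclideanLin (-(Aᴴ * A - (g : ℂ) • 1 + (τ : ℂ) • B))) x
        = ((-(‖Matrix.toEuclideanLin A x‖^2 - g * ‖x‖^2
            + τ * (qf (Matrix.toEuclideanLin B) x).re) : ℝ) : ℂ) := by
    intro g τ x
    have hmap : Matrix.toEuclideanLin (-(Aᴴ * A - (g : ℂ) • 1 + (τ : ℂ) • B))
        = -(Matrix.toEuclideanLin (Aᴴ * A) - (g : ℂ) • Matrix.toEuclideanLin 1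
            + (τ : ℂ) • Matrix.toEuclideanLin B) := by
      simp only [map_neg, map_add, map_sub, map_smul]
    rw [hmap, qf_negT, qf_addT, qf_subT, qf_smulT, qf_smulT, qf_L_mul_self, qf_L_one]
    conv_lhs => rw [qf_L_hermitian_real B hB x]
    push_cast
    ring
  -- Hermitian-ness of the combination
  have hNherm : ∀ (g τ : ℝ), (-(Aᴴ * A - (g : ℂ) • 1 + (τ : ℂ) • B)).IsHermitian := by
    intro g τ
    apply Matrix.IsHermitian.neg
    apply Matrix.IsHermitian.add
    · apply Matrix.IsHermitian.sub
      · exact Matrix.isHermitian_conjTranspose_mul_self A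
      · unfold Matrix.IsHermitian
        rw [Matrix.conjTranspose_smul]
        simp [Matrix.isHermitian_one.eq]
    · unfold Matrix.IsHermitian
      rw [Matrix.conjTranspose_smul]
      simp [hB.eq]
  -- weak duality
  have hweak : ∀ g ∈ SSet, ∀ x : EuclideanSpace ℂ (Fin n), ‖x‖ = 1 →
      0 ≤ (qf (Matrix.toEuclideanLin B) x).re → ‖Matrix.toEuclideanLin A x‖^2 ≤ g := by
    rintro g ⟨τ, hτ, hpsd⟩ x hx hbx
    have h0 := ((psd_iff_qf _ (hNherm g τ)).1 hpsd) x
    rw [hNval g τ x] at h0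
    simp only [Complex.ofReal_re] at h0
    rw [hx] at h0
    nlinarith [mul_nonneg hτ hbx]
  -- strong duality : γp^2 ∈ SSet
  have hstrong : γp^2 ∈ SSet := by
    set T : EuclideanSpace ℂ (Fin n) →ₗ[ℂ] EuclideanSpace ℂ (Fin n) :=
      (Matrix.toEuclideanLin (Aᴴ * A) - ((γp^2 : ℝ) : ℂ) • Matrix.toEuclideanLin 1)
        + Complex.I • Matrix.toEuclideanLin B with hT
    have hTval : ∀ x : EuclideanSpace ℂ (Fin n),
        qf T x = ((‖Matrix.toEuclideanLin A x‖^2 - γp^2 * ‖x‖^2 : ℝ) : ℂ)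
          + Complex.I * (((qf (Matrix.toEuclideanLin B) x).re : ℝ) : ℂ) := by
      intro x
      rw [hT, qf_addT, qf_subT, qf_smulT, qf_smulT, qf_L_mul_self, qf_L_one]
      conv_lhs => rw [qf_L_hermitian_real B hB x]
      push_cast
      ring
    have hTre : ∀ x, (qf T x).re
        = ‖Matrix.toEuclideanLin A x‖^2 - γp^2 * ‖x‖^2 := by
      intro x
      rw [hTval, Complex.add_re, Complex.ofReal_re, Complex.mul_re, Complex.I_re,
        Complex.I_im, Complex.ofReal_re, Complex.ofReal_im]
      ring
    have hTim : ∀ x, (qf T x).im = (qf (Matrix.toEuclideanLin B) x).re := by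
      intro x
      rw [hTval, Complex.add_im, Complex.ofReal_im, Complex.mul_im, Complex.I_re,
        Complex.I_im, Complex.ofReal_re, Complex.ofReal_im]
      ring
    have h1 : ∀ x : EuclideanSpace ℂ (Fin n), 0 ≤ (qf T x).im → (qf T x).re ≤ 0 := by
      intro x hqx
      rw [hTim] at hqx
      rw [hTre, sub_nonpos]
      by_cases hx0 : x = 0
      · simp [hx0]
      · have hr : (0:ℝ) < ‖x‖ := norm_pos_iff.2 hx0
        set u : EuclideanSpace ℂ (Fin n) := ((‖x‖⁻¹ : ℝ) : ℂ) • x with hu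
        have hun : ‖u‖ = 1 := by
          rw [hu, norm_smul]
          simp [inv_mul_cancel₀ (ne_of_gt hr)]
        have hbu : 0 ≤ (qf (Matrix.toEuclideanLin B) u).re := by
          rw [hu, qf_real_smul]
          rw [Complex.mul_re]
          have him : (((‖x‖⁻¹:ℝ):ℂ)^2).im = 0 := by
            norm_cast
          have hre : (((‖x‖⁻¹:ℝ):ℂ)^2).re = (‖x‖⁻¹)^2 := by
            norm_cast
          rw [him, hre]
          simp only [zero_mul, sub_zero]
          positivity
        have hmemu : ‖Matrix.toEuclideanLin A u‖ ∈ Bset := ⟨u, hun, hbu, rfl⟩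
        have hle : ‖Matrix.toEuclideanLin A u‖ ≤ γp := le_csSup hBdd hmemu
        have hAu : ‖Matrix.toEuclideanLin A u‖ = ‖x‖⁻¹ * ‖Matrix.toEuclideanLin A x‖ := by
          rw [hu, map_smul, norm_smul]
          congr 1
          simp [abs_of_nonneg (le_of_lt (inv_pos.2 hr))]
        rw [hAu] at hle
        have h2 : ‖Matrix.toEuclideanLin A x‖ ≤ ‖x‖ * γp := by
          rw [inv_mul_le_iff₀ hr] at hle
          linarith [hle]
        nlinarith [norm_nonneg (Matrix.toEuclideanLin A x), norm_nonneg x]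
    have h2 : ∃ y, 0 < (qf T y).im := ⟨x₀, by rw [hTim]; exact hfeas⟩
    obtain ⟨τ, hτ, hineq⟩ := s_lemma T h1 h2
    refine ⟨τ, hτ, ?_⟩
    rw [psd_iff_qf _ (hNherm (γp^2) τ)]
    intro x
    rw [hNval (γp^2) τ x]
    simp only [Complex.ofReal_re]
    have := hineq x
    rw [hTre, hTim] at this
    linarith
  have hSne : SSet.Nonempty := ⟨γp^2, hstrong⟩
  have hSnn : ∀ g ∈ SSet, 0 ≤ g := by
    intro g hg
    have := hweak g hg x₀ hx₀ (le_of_lt hfeas)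
    exact le_trans (sq_nonneg _) this
  refine ⟨hγnn, hSne, hSnn, ?_⟩
  apply le_antisymm
  · exact csInf_le ⟨0, fun g hg => hSnn g hg⟩ hstrong
  · apply le_csInf hSne
    intro g hg
    have hg0 : 0 ≤ g := hSnn g hg
    have hsup : γp ≤ Real.sqrt g := by
      apply csSup_le hBne
      rintro b ⟨x, hx, hbx, rfl⟩
      have := hweak g hg x hx hbx
      exact (Real.le_sqrt (norm_nonneg _) hg0).2 this
    calc γp^2 ≤ (Real.sqrt g)^2 := pow_le_pow_left₀ hγnn hsup 2
    _ = g := Real.sq_sqrt hg0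

set_option maxHeartbeats 1600000 in
/-- Paper's Proposition 4: SDP computation of the constrained gain `γ_θ(A)` of an
accretive matrix `A`. -/
theorem constrained_gain_sdp {n : ℕ} (hn : 1 ≤ n)
    (A : Matrix (Fin n) (Fin n) ℂ) (hacc : (A + Aᴴ).PosDef)
    (θ : ℝ) (hθ0 : 0 ≤ θ) (hθ : θ < Real.pi / 2)
    (xp xm : EuclideanSpace ℂ (Fin n)) (hxp : ‖xp‖ = 1) (hxm : ‖xm‖ = 1)
    (hfeasp : Real.tan θ * (inner ℂ xp (Matrix.toEuclideanLin A xp) : ℂ).re <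
      (inner ℂ xp (Matrix.toEuclideanLin A xp) : ℂ).im)
    (hfeasm : (inner ℂ xm (Matrix.toEuclideanLin A xm) : ℂ).im <
      -(Real.tan θ * (inner ℂ xm (Matrix.toEuclideanLin A xm) : ℂ).re)) :
    let t : ℝ := Real.tan θ
    let Ah : Matrix (Fin n) (Fin n) ℂ := ((2 : ℂ))⁻¹ • (A + Aᴴ)
    let As : Matrix (Fin n) (Fin n) ℂ := ((2 * Complex.I))⁻¹ • (A - Aᴴ)
    let γ : ℝ := sSup { g : ℝ | ∃ x : EuclideanSpace ℂ (Fin n), ‖x‖ = 1 ∧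
      t * (inner ℂ x (Matrix.toEuclideanLin A x) : ℂ).re ≤
        |(inner ℂ x (Matrix.toEuclideanLin A x) : ℂ).im| ∧
      g = ‖Matrix.toEuclideanLin A x‖ }
    let Sg : Set ℝ := { g | ∃ τ : ℝ, 0 ≤ τ ∧
      (-(Aᴴ * A - (g : ℂ) • 1 + (τ : ℂ) • (As - (t : ℂ) • Ah))).PosSemidef }
    let Sh : Set ℝ := { h | ∃ τ : ℝ, 0 ≤ τ ∧
      (-(Aᴴ * A - (h : ℂ) • 1 + (τ : ℂ) • (-As - (t : ℂ) • Ah))).PosSemidef }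
    Sg.Nonempty ∧ Sh.Nonempty ∧ 0 ≤ sInf Sg ∧ 0 ≤ sInf Sh ∧
      γ = max (Real.sqrt (sInf Sg)) (Real.sqrt (sInf Sh)) := by
  intro t Ah As γ Sg Sh
  have ht0 : 0 ≤ t := Real.tan_nonneg_of_nonneg_of_le_pi_div_two hθ0 (le_of_lt hθ)
  -- Hermitian parts
  have hAh : Ah.IsHermitian := by
    show Ahᴴ = Ah
    show (((2 : ℂ))⁻¹ • (A + Aᴴ))ᴴ = ((2 : ℂ))⁻¹ • (A + Aᴴ)
    rw [Matrix.conjTranspose_smul, Matrix.conjTranspose_add, Matrix.conjTranspose_conjTranspose]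
    have h2 : star ((2:ℂ))⁻¹ = ((2:ℂ))⁻¹ := by
      rw [star_inv₀]
      norm_num
    rw [h2, add_comm]
  have hAs : As.IsHermitian := by
    show (((2 * Complex.I))⁻¹ • (A - Aᴴ))ᴴ = ((2 * Complex.I))⁻¹ • (A - Aᴴ)
    rw [Matrix.conjTranspose_smul, Matrix.conjTranspose_sub, Matrix.conjTranspose_conjTranspose]
    have h2 : star ((2 * Complex.I))⁻¹ = -((2 * Complex.I))⁻¹ := by
      rw [star_inv₀]
      have hstar : star (2 * Complex.I) = -(2 * Complex.I) := by
        simp [Complex.ext_iff]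
      rw [hstar, inv_neg]
    rw [h2]
    rw [neg_smul, ← smul_neg, neg_sub]
  have hBp : (As - (t : ℂ) • Ah).IsHermitian := by
    apply Matrix.IsHermitian.sub hAs
    show ((t:ℂ) • Ah)ᴴ = (t:ℂ) • Ah
    rw [Matrix.conjTranspose_smul, hAh.eq]
    congr 1
    simp [Complex.ext_iff]
  have hBm : (-As - (t : ℂ) • Ah).IsHermitian := by
    apply Matrix.IsHermitian.sub hAs.neg
    show ((t:ℂ) • Ah)ᴴ = (t:ℂ) • Ah
    rw [Matrix.conjTranspose_smul, hAh.eq]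
    congr 1
    simp [Complex.ext_iff]
  -- quadratic-form values
  have hAhval : ∀ x : EuclideanSpace ℂ (Fin n),
      qf (Matrix.toEuclideanLin Ah) x = (((qf (Matrix.toEuclideanLin A) x).re : ℝ) : ℂ) := by
    intro x
    have hmap : Matrix.toEuclideanLin Ah
        = ((2:ℂ))⁻¹ • (Matrix.toEuclideanLin A + Matrix.toEuclideanLin Aᴴ) := by
      show Matrix.toEuclideanLin (((2 : ℂ))⁻¹ • (A + Aᴴ)) = _
      simp only [map_smul, map_add]
    rw [hmap, qf_smulT, qf_addT, qf_L_conjTranspose, Complex.add_conj]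
    push_cast
    ring
  have hAsval : ∀ x : EuclideanSpace ℂ (Fin n),
      qf (Matrix.toEuclideanLin As) x = (((qf (Matrix.toEuclideanLin A) x).im : ℝ) : ℂ) := by
    intro x
    have hmap : Matrix.toEuclideanLin As
        = ((2 * Complex.I))⁻¹ • (Matrix.toEuclideanLin A - Matrix.toEuclideanLin Aᴴ) := by
      show Matrix.toEuclideanLin (((2 * Complex.I))⁻¹ • (A - Aᴴ)) = _
      simp only [map_smul, map_sub]
    rw [hmap, qf_smulT, qf_subT, qf_L_conjTranspose, Complex.sub_conj]
    have hIne := Complex.I_ne_zero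
    field_simp
    push_cast
    ring
  have hBpval : ∀ x : EuclideanSpace ℂ (Fin n),
      qf (Matrix.toEuclideanLin (As - (t : ℂ) • Ah)) x
        = (((qf (Matrix.toEuclideanLin A) x).im - t * (qf (Matrix.toEuclideanLin A) x).re : ℝ) : ℂ) := by
    intro x
    have hmap : Matrix.toEuclideanLin (As - (t : ℂ) • Ah)
        = Matrix.toEuclideanLin As - (t:ℂ) • Matrix.toEuclideanLin Ah := by
      simp only [map_sub, map_smul]
    rw [hmap, qf_subT, qf_smulT, hAsval, hAhval]
    push_cast
    ring
  have hBmval : ∀ x : EuclideanSpace ℂ (Fin n),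
      qf (Matrix.toEuclideanLin (-As - (t : ℂ) • Ah)) x
        = ((-(qf (Matrix.toEuclideanLin A) x).im - t * (qf (Matrix.toEuclideanLin A) x).re : ℝ) : ℂ) := by
    intro x
    have hmap : Matrix.toEuclideanLin (-As - (t : ℂ) • Ah)
        = -Matrix.toEuclideanLin As - (t:ℂ) • Matrix.toEuclideanLin Ah := by
      simp only [map_sub, map_smul, map_neg]
    rw [hmap, qf_subT, qf_negT, qf_smulT, hAsval, hAhval]
    push_cast
    ring
  have hBpre : ∀ x : EuclideanSpace ℂ (Fin n),
      (qf (Matrix.toEuclideanLin (As - (t : ℂ) • Ah)) x).re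
        = (qf (Matrix.toEuclideanLin A) x).im - t * (qf (Matrix.toEuclideanLin A) x).re := by
    intro x; rw [hBpval]; exact Complex.ofReal_re _
  have hBmre : ∀ x : EuclideanSpace ℂ (Fin n),
      (qf (Matrix.toEuclideanLin (-As - (t : ℂ) • Ah)) x).re
        = -(qf (Matrix.toEuclideanLin A) x).im - t * (qf (Matrix.toEuclideanLin A) x).re := by
    intro x; rw [hBmval]; exact Complex.ofReal_re _
  -- accretivity
  have haccre : ∀ x : EuclideanSpace ℂ (Fin n), ‖x‖ = 1 →
      0 < (qf (Matrix.toEuclideanLin A) x).re := by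
    intro x hx
    have hx0 : x ≠ 0 := by
      intro h
      rw [h, norm_zero] at hx
      norm_num at hx
    have hv0 : (WithLp.equiv 2 (Fin n → ℂ)) x ≠ 0 := by
      intro h
      apply hx0
      have := congrArg (WithLp.equiv 2 (Fin n → ℂ)).symm h
      simpa using this
    have hpos := hacc.dotProduct_mulVec_pos hv0
    rw [← qf_L_apply] at hpos
    have hqsum : qf (Matrix.toEuclideanLin (A + Aᴴ)) x
        = ((2 * (qf (Matrix.toEuclideanLin A) x).re : ℝ) : ℂ) := by
      have hmap : Matrix.toEuclideanLin (A + Aᴴ)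
          = Matrix.toEuclideanLin A + Matrix.toEuclideanLin Aᴴ := by simp only [map_add]
      rw [hmap, qf_addT, qf_L_conjTranspose, Complex.add_conj]
    rw [hqsum] at hpos
    have := (Complex.lt_def.1 hpos).1
    simp only [Complex.zero_re, Complex.ofReal_re] at this
    linarith
  -- feasibility for the branches
  have hfp : 0 < (qf (Matrix.toEuclideanLin (As - (t : ℂ) • Ah)) xp).re := by
    rw [hBpre]
    have : t * (qf (Matrix.toEuclideanLin A) xp).re < (qf (Matrix.toEuclideanLin A) xp).im :=
      hfeasp
    linarith
  have hfm : 0 < (qf (Matrix.toEuclideanLin (-As - (t : ℂ) • Ah)) xm).re := by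
    rw [hBmre]
    have : (qf (Matrix.toEuclideanLin A) xm).im
        < -(t * (qf (Matrix.toEuclideanLin A) xm).re) := hfeasm
    linarith
  obtain ⟨hγp0, hSgne, hSgnn, hSgInf⟩ := branch_sdp A (As - (t : ℂ) • Ah) hBp xp hxp hfp
  obtain ⟨hγm0, hShne, hShnn, hShInf⟩ := branch_sdp A (-As - (t : ℂ) • Ah) hBm xm hxm hfm
  set Bsetp : Set ℝ := {g : ℝ | ∃ x : EuclideanSpace ℂ (Fin n), ‖x‖ = 1 ∧
      0 ≤ (qf (Matrix.toEuclideanLin (As - (t : ℂ) • Ah)) x).re ∧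
      g = ‖Matrix.toEuclideanLin A x‖} with hBsetp
  set Bsetm : Set ℝ := {g : ℝ | ∃ x : EuclideanSpace ℂ (Fin n), ‖x‖ = 1 ∧
      0 ≤ (qf (Matrix.toEuclideanLin (-As - (t : ℂ) • Ah)) x).re ∧
      g = ‖Matrix.toEuclideanLin A x‖} with hBsetm
  -- the union decomposition
  have hunion : { g : ℝ | ∃ x : EuclideanSpace ℂ (Fin n), ‖x‖ = 1 ∧
      t * (qf (Matrix.toEuclideanLin A) x).re ≤ |(qf (Matrix.toEuclideanLin A) x).im| ∧
      g = ‖Matrix.toEuclideanLin A x‖ } = Bsetp ∪ Bsetm := by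
    ext g
    constructor
    · rintro ⟨x, hx, habs, rfl⟩
      rcases le_or_gt 0 (qf (Matrix.toEuclideanLin A) x).im with him | him
      · left
        refine ⟨x, hx, ?_, rfl⟩
        rw [hBpre]
        rw [abs_of_nonneg him] at habs
        linarith
      · right
        refine ⟨x, hx, ?_, rfl⟩
        rw [hBmre]
        rw [abs_of_neg him] at habs
        linarith
    · rintro (⟨x, hx, hcon, rfl⟩ | ⟨x, hx, hcon, rfl⟩)
      · refine ⟨x, hx, ?_, rfl⟩
        rw [hBpre] at hcon
        have htre : 0 ≤ t * (qf (Matrix.toEuclideanLin A) x).re :=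
          mul_nonneg ht0 (le_of_lt (haccre x hx))
        rw [abs_of_nonneg (by linarith)]
        linarith
      · refine ⟨x, hx, ?_, rfl⟩
        rw [hBmre] at hcon
        have htre : 0 ≤ t * (qf (Matrix.toEuclideanLin A) x).re :=
          mul_nonneg ht0 (le_of_lt (haccre x hx))
        have him : (qf (Matrix.toEuclideanLin A) x).im ≤ 0 := by linarith
        rw [abs_of_nonpos him]
        linarith
  -- boundedness of the branch sets
  set CLM : EuclideanSpace ℂ (Fin n) →L[ℂ] EuclideanSpace ℂ (Fin n) :=
    LinearMap.toContinuousLinearMap (Matrix.toEuclideanLin A) with hCLM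
  have hCLMapp : ∀ x : EuclideanSpace ℂ (Fin n), Matrix.toEuclideanLin A x = CLM x := by
    intro x
    rw [hCLM]
    exact (congrFun (LinearMap.coe_toContinuousLinearMap'
      (Matrix.toEuclideanLin A)) x).symm
  have hBddp : BddAbove Bsetp := by
    refine ⟨‖CLM‖, ?_⟩
    rintro g ⟨x, hx, _, rfl⟩
    rw [hCLMapp]
    calc ‖CLM x‖ ≤ ‖CLM‖ * ‖x‖ := CLM.le_opNorm x
    _ = ‖CLM‖ := by rw [hx, mul_one]
  have hBddm : BddAbove Bsetm := by
    refine ⟨‖CLM‖, ?_⟩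
    rintro g ⟨x, hx, _, rfl⟩
    rw [hCLMapp]
    calc ‖CLM x‖ ≤ ‖CLM‖ * ‖x‖ := CLM.le_opNorm x
    _ = ‖CLM‖ := by rw [hx, mul_one]
  have hBnep : Bsetp.Nonempty := ⟨_, xp, hxp, le_of_lt hfp, rfl⟩
  have hBnem : Bsetm.Nonempty := ⟨_, xm, hxm, le_of_lt hfm, rfl⟩
  refine ⟨hSgne, hShne, ?_, ?_, ?_⟩
  · exact le_csInf hSgne fun g hg => hSgnn g hg
  · exact le_csInf hShne fun g hg => hShnn g hg
  · show sSup { g : ℝ | ∃ x : EuclideanSpace ℂ (Fin n), ‖x‖ = 1 ∧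
        t * (qf (Matrix.toEuclideanLin A) x).re ≤ |(qf (Matrix.toEuclideanLin A) x).im| ∧
        g = ‖Matrix.toEuclideanLin A x‖ }
      = max (Real.sqrt (sInf { g : ℝ | ∃ τ : ℝ, 0 ≤ τ ∧
          (-(Aᴴ * A - (g : ℂ) • 1 + (τ : ℂ) • (As - (t : ℂ) • Ah))).PosSemidef }))
        (Real.sqrt (sInf { h : ℝ | ∃ τ : ℝ, 0 ≤ τ ∧
          (-(Aᴴ * A - (h : ℂ) • 1 + (τ : ℂ) • (-As - (t : ℂ) • Ah))).PosSemidef }))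
    rw [hunion, csSup_union hBddp hBnep hBddm hBnem]
    rw [hSgInf, hShInf, Real.sqrt_sq hγp0, Real.sqrt_sq hγm0]
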